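/- If X is a digraph whose underlying graph Γ(X) is bipartite, then the H-spectrum of X is symmetric about 0: the multiset of eigenvalues of H(X), counted with multiplicity, is invariant under negation. -/

import Mathlib

open Matrix Complex Polynomial

/-- Hermitian adjacency matrix of a digraph given by its arc relation `E`. -/
def hermAdj {V : Type*} (E : V → V → Prop) [DecidableRel E] : Matrix V V ℂ :=
  fun u v =>
    if E u v ∧ E v u then 1
    else if E u v then Complex.I
    else if E v u then -Complex.I
    else 0

/-- Conjugation invariance of the characteristic polynomial. -/
lemma charpoly_conj_aux {V : Type*} [Fintype V] [DecidableEq V]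
    (U M W : Matrix V V ℂ) (h : U * W = 1) :
    (U * M * W).charpoly = M.charpoly := by
  have hmap : (U.map (C : ℂ →+* ℂ[X])) * (W.map C) = 1 := by
    rw [← Matrix.map_mul, h, Matrix.map_one _ (map_zero C) (map_one C)]
  have key : charmatrix (U * M * W)
      = (U.map C) * charmatrix M * (W.map C) := by
    unfold charmatrix
    rw [Matrix.mul_sub, Matrix.sub_mul]
    congr 1
    · have hc : Commute ((Matrix.scalar V) (X : ℂ[X])) (U.map (C : ℂ →+* ℂ[X])) :=
        Matrix.scalar_commute _ (fun r' => Commute.all _ _) _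
      rw [← hc.eq, mul_assoc, hmap, mul_one]
    · simp [Matrix.map_mul]
  rw [Matrix.charpoly, Matrix.charpoly, key, det_mul, det_mul]
  have : (U.map (C : ℂ →+* ℂ[X])).det * (charmatrix M).det * (W.map C).det
      = (U.map (C : ℂ →+* ℂ[X]) * W.map C).det * (charmatrix M).det := by
    rw [det_mul]; ring
  rw [this, hmap, det_one, one_mul]

lemma charpoly_diagonal_aux {V : Type*} [Fintype V] [DecidableEq V] (d : V → ℂ) :
    (Matrix.diagonal d).charpoly = ∏ i, (X - C (d i)) := by
  have : charmatrix (Matrix.diagonal d) = Matrix.diagonal fun i => X - C (d i) := by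
    ext i j
    by_cases hij : i = j
    · subst hij; simp [charmatrix_apply_eq]
    · rw [charmatrix_apply_ne _ _ _ hij, Matrix.diagonal_apply_ne _ hij,
        Matrix.diagonal_apply_ne _ hij, map_zero, neg_zero]
  rw [Matrix.charpoly, this, det_diagonal]

/-- If the underlying graph of a digraph `X` is bipartite (there is a set `A` of
vertices such that every edge of the underlying graph has exactly one endpoint in
`A`), then the `H`-spectrum of `X` is symmetric about `0`. -/
theorem stmt10 {V : Type*} [Fintype V] [DecidableEq V]
    (E : V → V → Prop) [DecidableRel E] (hirr : ∀ v, ¬ E v v)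
    (hbip : ∃ A : Set V, ∀ u v, (E u v ∨ E v u) → (u ∈ A ↔ v ∉ A))
    (hH : (hermAdj E).IsHermitian) :
    Multiset.map hH.eigenvalues Finset.univ.val =
      Multiset.map (fun i => - hH.eigenvalues i) Finset.univ.val := by
  classical
  obtain ⟨A, hA⟩ := hbip
  set U : Matrix V V ℂ := (hH.eigenvectorUnitary : Matrix V V ℂ) with hU
  have hUW : U * star U = 1 := Matrix.mem_unitaryGroup_iff.mp hH.eigenvectorUnitary.2
  have hspec := hH.spectral_theorem
  -- charpoly (hermAdj E) = ∏ (X - C λᵢ)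
  have hcp : (hermAdj E).charpoly = ∏ i, (X - C ((hH.eigenvalues i : ℝ) : ℂ)) := by
    conv_lhs => rw [hspec]
    rw [Unitary.conjStarAlgAut_apply]
    rw [charpoly_conj_aux _ _ _ hUW, charpoly_diagonal_aux]
    rfl
  -- charpoly (-(hermAdj E)) = ∏ (X - C (-λᵢ))
  have hcpneg : (-(hermAdj E)).charpoly = ∏ i, (X - C (-((hH.eigenvalues i : ℝ) : ℂ))) := by
    have : -(hermAdj E) = U * (Matrix.diagonal fun i => -((hH.eigenvalues i : ℝ) : ℂ)) * star U := by
      conv_lhs => rw [hspec]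
      rw [← Matrix.diagonal_neg]
      simp only [Matrix.neg_mul, Matrix.mul_neg]
      rfl
    rw [this, charpoly_conj_aux _ _ _ hUW, charpoly_diagonal_aux]
  -- sign matrix
  set d : V → ℂ := fun v => if v ∈ A then 1 else -1 with hd
  have hdd : ∀ v, d v * d v = 1 := by
    intro v; by_cases h : v ∈ A <;> simp [hd, h]
  set D : Matrix V V ℂ := Matrix.diagonal d with hD
  have hDD : D * D = 1 := by
    rw [hD, Matrix.diagonal_mul_diagonal]
    ext i j
    by_cases hij : i = j
    · subst hij; simp [hdd i]
    · simp [Matrix.diagonal_apply_ne _ hij, Matrix.one_apply_ne hij]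
  have hDHD : D * (hermAdj E) * D = -(hermAdj E) := by
    ext u v
    rw [hD]
    simp only [Matrix.neg_apply, Matrix.diagonal_mul, Matrix.mul_diagonal]
    by_cases h : E u v ∨ E v u
    · have hopp : d u * d v = -1 := by
        have := hA u v h
        by_cases hu : u ∈ A
        · have hv : v ∉ A := this.mp hu
          simp [hd, hu, hv]
        · have hv : v ∈ A := by
            by_contra hv
            exact hu (this.mpr hv)
          simp [hd, hu, hv]
      calc d u * (hermAdj E) u v * d v = (d u * d v) * (hermAdj E) u v := by ring
        _ = -(hermAdj E) u v := by rw [hopp]; ring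
    · push_neg at h
      have : (hermAdj E) u v = 0 := by
        unfold hermAdj
        simp [h.1, h.2]
      rw [this]; ring
  have hsim : (-(hermAdj E)).charpoly = (hermAdj E).charpoly := by
    conv_lhs => rw [← hDHD]
    exact charpoly_conj_aux D (hermAdj E) D hDD
  -- compare roots
  have hroots : (Multiset.map (fun i => ((hH.eigenvalues i : ℝ) : ℂ)) Finset.univ.val)
      = (Multiset.map (fun i => (-(hH.eigenvalues i : ℝ) : ℂ)) Finset.univ.val) := by
    have h1 : (∏ i : V, (X - C ((hH.eigenvalues i : ℝ) : ℂ))).roots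
        = Multiset.map (fun i => ((hH.eigenvalues i : ℝ) : ℂ)) Finset.univ.val := by
      rw [← Polynomial.roots_multiset_prod_X_sub_C
        (Multiset.map (fun i => ((hH.eigenvalues i : ℝ) : ℂ)) Finset.univ.val)]
      congr 1
      rw [Multiset.map_map]
      rfl
    have h2 : (∏ i : V, (X - C (-((hH.eigenvalues i : ℝ) : ℂ)))).roots
        = Multiset.map (fun i => (-(hH.eigenvalues i : ℝ) : ℂ)) Finset.univ.val := by
      rw [← Polynomial.roots_multiset_prod_X_sub_C
        (Multiset.map (fun i => (-(hH.eigenvalues i : ℝ) : ℂ)) Finset.univ.val)]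
      congr 1
      rw [Multiset.map_map]
      rfl
    rw [← h1, ← h2, ← hcp, ← hcpneg, hsim]
  -- reduce ℂ equation to ℝ
  have hinj : Function.Injective ((↑) : ℝ → ℂ) := Complex.ofReal_injective
  apply Multiset.map_injective hinj
  rw [Multiset.map_map, Multiset.map_map]
  simpa [Function.comp_def, Complex.ofReal_neg] using hroots
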